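/- Let f(x, y) = xᵀ M y + yᵀ N y + mᵀ x + m̄ᵀ y + c be a function on {-1,1}^k × {-1,1}^k with M ∈ ℝ^{k×k} of rank at most k-2, N ∈ ℝ^{k×k}, m, m̄ ∈ ℝ^k, c ∈ ℝ. Then it is impossible that for every y ∈ {-1,1}^k, the unique maximizer over x ∈ {-1,1}^k of f(x, y) is x = y. -/
import Mathlib


open Matrix

lemma dot_update_aux {k : ℕ} (v y : Fin k → ℝ) (j : Fin k) (t : ℝ) :
    Function.update y j t ⬝ᵥ v = y ⬝ᵥ v + (t - y j) * v j := by
  unfold dotProduct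
  rw [← Finset.sum_erase_add _ _ (Finset.mem_univ j),
      ← Finset.sum_erase_add Finset.univ (fun i => y i * v i) (Finset.mem_univ j)]
  have : ∑ i ∈ Finset.univ.erase j, Function.update y j t i * v i
      = ∑ i ∈ Finset.univ.erase j, y i * v i := by
    refine Finset.sum_congr rfl fun i hi => ?_
    rw [Function.update_of_ne (Finset.ne_of_mem_erase hi)]
  rw [this, Function.update_self]
  ring

lemma dot_update_aux' {k : ℕ} (v y : Fin k → ℝ) (j : Fin k) (t : ℝ) :
    v ⬝ᵥ Function.update y j t = v ⬝ᵥ y + v j * (t - y j) := by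
  rw [dotProduct_comm, dot_update_aux, dotProduct_comm]
  ring

/-- Low-rank lemma: if the cross-term matrix M has rank ≤ k-2, then the function
f(x,y) = xᵀMy + yᵀNy + mᵀx + m̄ᵀy + c cannot have, for every hypercube point y,
the unique maximizer x = y over the hypercube. -/
theorem lowrank_no_exact_match_selector (k : ℕ) (hk : 1 ≤ k)
    (M N : Matrix (Fin k) (Fin k) ℝ) (m mb : Fin k → ℝ) (c : ℝ)
    (hM : M.rank ≤ k - 2) :
    ¬ (∀ y : Fin k → ℝ, (∀ j, y j = 1 ∨ y j = -1) →
        ∀ x : Fin k → ℝ, (∀ j, x j = 1 ∨ x j = -1) → x ≠ y →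
          x ⬝ᵥ M.mulVec y + y ⬝ᵥ N.mulVec y + m ⬝ᵥ x + mb ⬝ᵥ y + c <
          y ⬝ᵥ M.mulVec y + y ⬝ᵥ N.mulVec y + m ⬝ᵥ y + mb ⬝ᵥ y + c) := by
  intro H
  -- Step 1: single-flip consequence
  have key : ∀ y : Fin k → ℝ, (∀ j, y j = 1 ∨ y j = -1) →
      ∀ j, 0 < y j * ((M.mulVec y) j + m j) := by
    intro y hy j
    set x := Function.update y j (-(y j)) with hx
    have hxcube : ∀ i, x i = 1 ∨ x i = -1 := by
      intro i
      rcases eq_or_ne i j with rfl | hij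
      · rw [hx, Function.update_self]
        rcases hy i with h | h <;> simp [h]
      · rw [hx, Function.update_of_ne hij]; exact hy i
    have hxne : x ≠ y := by
      intro h
      have := congrFun h j
      rw [hx, Function.update_self] at this
      rcases hy j with h' | h' <;> rw [h'] at this <;> norm_num at this
    have h1 := H y hy x hxcube hxne
    have e1 : x ⬝ᵥ M.mulVec y = y ⬝ᵥ M.mulVec y + (-(y j) - y j) * (M.mulVec y) j :=
      dot_update_aux _ _ _ _
    have e2 : m ⬝ᵥ x = m ⬝ᵥ y + m j * (-(y j) - y j) := dot_update_aux' _ _ _ _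
    rw [e1, e2] at h1
    nlinarith [h1]
  -- Step 2: strict diagonal dominance
  have dom : ∀ j : Fin k, ∑ i ∈ Finset.univ.erase j, ‖M j i‖ < ‖M j j‖ := by
    intro j
    classical
    set ε : ℝ := if 0 ≤ m j then -1 else 1 with hε
    set y : Fin k → ℝ := fun i =>
      if i = j then ε else -ε * (if 0 ≤ M j i then 1 else -1) with hy
    have hεcube : ε = 1 ∨ ε = -1 := by
      rw [hε]; split <;> simp
    have hycube : ∀ i, y i = 1 ∨ y i = -1 := by
      intro i
      have hval : y i = ε ∨ y i = -ε := by
        rw [hy]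
        by_cases hij : i = j
        · left; simp [hij]
        · simp only [hij, if_false]
          rcases le_or_gt 0 (M j i) with h | h
          · right; rw [if_pos h]; ring
          · left; rw [if_neg (not_le.mpr h)]; ring
      rcases hval with h | h <;> rcases hεcube with h' | h' <;> rw [h, h'] <;> norm_num
    have hk := key y hycube j
    have hyj : y j = ε := by rw [hy]; simp
    have hε2 : ε * ε = 1 := by rcases hεcube with h | h <;> rw [h] <;> norm_num
    have hmul : (M.mulVec y) j = M j j * ε + ∑ i ∈ Finset.univ.erase j, M j i * y i := by
      unfold Matrix.mulVec dotProduct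
      rw [← Finset.sum_erase_add _ _ (Finset.mem_univ j), hyj]
      ring
    have hterm : ∀ i ∈ Finset.univ.erase j, ε * (M j i * y i) = -|M j i| := by
      intro i hi
      have hij : i ≠ j := Finset.ne_of_mem_erase hi
      rw [hy]
      simp only [hij, if_false]
      rcases le_or_gt 0 (M j i) with h | h
      · rw [if_pos h, abs_of_nonneg h]; nlinarith
      · rw [if_neg (not_le.mpr h), abs_of_neg h]; nlinarith
    have hεm : ε * m j = -|m j| := by
      rw [hε]
      rcases le_or_gt 0 (m j) with h | h
      · rw [if_pos h, abs_of_nonneg h]; ring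
      · rw [if_neg (not_le.mpr h), abs_of_neg h]; ring
    rw [hyj, hmul] at hk
    have hsum : ε * ∑ i ∈ Finset.univ.erase j, M j i * y i
        = -∑ i ∈ Finset.univ.erase j, |M j i| := by
      rw [Finset.mul_sum, ← Finset.sum_neg_distrib]
      exact Finset.sum_congr rfl hterm
    have hk2 : 0 < M j j - (∑ i ∈ Finset.univ.erase j, |M j i|) - |m j| := by
      have : ε * (M j j * ε + ∑ i ∈ Finset.univ.erase j, M j i * y i + m j)
          = M j j - (∑ i ∈ Finset.univ.erase j, |M j i|) - |m j| := by
        rw [mul_add, mul_add, hsum, hεm,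
          show ε * (M j j * ε) = M j j * (ε * ε) by ring, hε2, mul_one]
        ring
      linarith [this ▸ hk]
    have habs : |m j| ≥ 0 := abs_nonneg _
    have hjj : 0 < M j j := by
      have : (0:ℝ) ≤ ∑ i ∈ Finset.univ.erase j, |M j i| :=
        Finset.sum_nonneg fun i _ => abs_nonneg _
      linarith
    simp only [Real.norm_eq_abs]
    rw [abs_of_pos hjj]
    linarith
  have hdet : M.det ≠ 0 := det_ne_zero_of_sum_row_lt_diag dom
  have hunit : IsUnit M := (Matrix.isUnit_iff_isUnit_det M).mpr (isUnit_iff_ne_zero.mpr hdet)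
  have hrank : M.rank = k := by
    rw [Matrix.rank_of_isUnit M hunit, Fintype.card_fin]
  rw [hrank] at hM
  omega
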